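/- arXiv:1703.09765 — 3 statements merged into one kernel-verified Lean document; each statement's English description precedes it below -/
import Mathlib

section
/- Let G_I be a connected undirected graph on vertex set V, let G_m be a maximal triangle-free spanning subgraph of G_I, and let G_C be any graph with G_m ⊆ G_C ⊆ G_I. For i ∈ V, let N_I(i) denote the neighbors of i in G_I, let Ñ_I(j) = N_I(j) ∪ {j}, and let N_C(i) denote the neighbors of i in G_C. Then for every i ∈ V, the union over j ∈ N_C(i) of (N_I(i) ∩ Ñ_I(j)) equals N_I(i). -/
open Set

/-- For a connected interference graph `GI`, a maximal triangle-free spanning subgraph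
`Gm` of `GI`, and any communication graph `GC` with `Gm ⊆ GC ⊆ GI`, each player `i`
can gather the actions of all of its interference neighbors from its communication
neighbors: `⋃_{j ∈ N_C(i)} (N_I(i) ∩ Ñ_I(j)) = N_I(i)`. -/
theorem stmt_1 {V : Type*} [Fintype V] (GI Gm GC : SimpleGraph V)
    (hconn : GI.Connected) (hle : Gm ≤ GI) (htf : Gm.CliqueFree 3)
    (hmax : ∀ i j : V, GI.Adj i j → ¬ Gm.Adj i j →
      ¬ (Gm ⊔ SimpleGraph.fromEdgeSet {s(i, j)}).CliqueFree 3)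
    (h1 : Gm ≤ GC) (h2 : GC ≤ GI) :
    ∀ i : V,
      (⋃ j ∈ GC.neighborSet i, (GI.neighborSet i ∩ insert j (GI.neighborSet j)))
        = GI.neighborSet i := by
  classical
  intro i
  apply Set.Subset.antisymm
  · intro k hk
    simp only [Set.mem_iUnion, Set.mem_inter_iff] at hk
    obtain ⟨j, hj, hk, _⟩ := hk
    exact hk
  · intro k hk
    simp only [SimpleGraph.mem_neighborSet] at hk
    by_cases hck : GC.Adj i k
    · exact Set.mem_biUnion hck ⟨hk, Set.mem_insert _ _⟩
    · have hgm : ¬ Gm.Adj i k := fun h => hck (h1 h)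
      have hne : i ≠ k := hk.ne
      have hT := hmax i k hk hgm
      rw [SimpleGraph.CliqueFree] at hT
      push_neg at hT
      obtain ⟨t, ht⟩ := hT
      rw [SimpleGraph.is3Clique_iff] at ht
      obtain ⟨a, b, c, hab, hac, hbc, -⟩ := ht
      have key : ∃ j, Gm.Adj i j ∧ Gm.Adj j k := by
        simp only [SimpleGraph.sup_adj, SimpleGraph.fromEdgeSet_adj,
          Set.mem_singleton_iff, Sym2.eq_iff] at hab hac hbc
        have decomp : ∀ x y : V,
            (Gm.Adj x y ∨ ((x = i ∧ y = k ∨ x = k ∧ y = i) ∧ x ≠ y)) →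
            Gm.Adj x y ∨ (x = i ∧ y = k) ∨ (x = k ∧ y = i) := by
          tauto
        rcases decomp a b hab with h1 | ⟨rfl, rfl⟩ | ⟨rfl, rfl⟩ <;>
        rcases decomp _ _ hac with h2 | ⟨h2a, h2b⟩ | ⟨h2a, h2b⟩ <;>
        rcases decomp _ _ hbc with h3 | ⟨h3a, h3b⟩ | ⟨h3a, h3b⟩ <;>
          subst_vars <;>
          first
            | exact absurd rfl hne
            | exact absurd rfl hne.symm
            | exact absurd h1 (Gm.irrefl)
            | exact absurd h2 (Gm.irrefl)
            | exact absurd h3 (Gm.irrefl)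
            | exact (htf _ (SimpleGraph.is3Clique_triple_iff.mpr ⟨h1, h2, h3⟩)).elim
            | exact ⟨_, h1, h2⟩
            | exact ⟨_, h1, h2.symm⟩
            | exact ⟨_, h1, h3⟩
            | exact ⟨_, h1, h3.symm⟩
            | exact ⟨_, h1.symm, h2⟩
            | exact ⟨_, h1.symm, h2.symm⟩
            | exact ⟨_, h1.symm, h3⟩
            | exact ⟨_, h1.symm, h3.symm⟩
            | exact ⟨_, h2, h1⟩
            | exact ⟨_, h2, h1.symm⟩
            | exact ⟨_, h2, h3⟩
            | exact ⟨_, h2, h3.symm⟩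
            | exact ⟨_, h2.symm, h1⟩
            | exact ⟨_, h2.symm, h1.symm⟩
            | exact ⟨_, h2.symm, h3⟩
            | exact ⟨_, h2.symm, h3.symm⟩
            | exact ⟨_, h3, h1⟩
            | exact ⟨_, h3, h1.symm⟩
            | exact ⟨_, h3, h2⟩
            | exact ⟨_, h3, h2.symm⟩
            | exact ⟨_, h3.symm, h1⟩
            | exact ⟨_, h3.symm, h1.symm⟩
            | exact ⟨_, h3.symm, h2⟩
            | exact ⟨_, h3.symm, h2.symm⟩
      obtain ⟨j, hij, hjk⟩ := key
      exact Set.mem_biUnion (h1 hij) ⟨hk, Set.mem_insert_iff.mpr (Or.inr (hle hjk))⟩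
end

section
/- Let e_{s} denote standard unit vectors in R^m, and for each player pair (i,j) with j ∈ Ñ_I(i) let E_j^i = e_{s_{ij}} be a distinct standard unit vector (with E_j^i = 0 if j ∉ Ñ_I(i)), where the index assignment s_{ij} is a bijection onto {1,...,m}. Define H = [Σ_{i=1}^N E_1^i, ..., Σ_{i=1}^N E_N^i] ∈ R^{m×N} and, for a pair i_k, j_k with communication index set ind(i_k,j_k) ⊆ Ñ_I(i_k) ∩ Ñ_I(j_k), define W(k) = I_m - (1/2) Σ_{l ∈ ind(i_k,j_k)} (E_l^{i_k} - E_l^{j_k})(E_l^{i_k} - E_l^{j_k})^T. Then W(k) H = H and H^T W(k) = H^T. -/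
open Matrix

/-- With the estimate-indicator vectors `E_j^i ∈ ℝ^m` (distinct standard unit vectors
for `j ∈ Ñ_I(i)`, zero otherwise, jointly enumerating all `m` coordinates),
`H = [Σᵢ E_1^i, …, Σᵢ E_N^i]` and the gossip communication matrix
`W(k) = I - (1/2) Σ_{l ∈ ind(i_k,j_k)} (E_l^{i_k} - E_l^{j_k})(E_l^{i_k} - E_l^{j_k})ᵀ`
satisfy `W(k) H = H` and `Hᵀ W(k) = Hᵀ`. -/
theorem stmt_3 {N m : ℕ}
    (tN : Fin N → Finset (Fin N))                  -- Ñ_I(i)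
    (s : ∀ i j : Fin N, j ∈ tN i → Fin m)          -- coordinate assignment s_{ij}
    (E : Fin N → Fin N → Fin m → ℝ)
    (hE : ∀ (i j : Fin N) (h : j ∈ tN i), E i j = Pi.single (s i j h) 1)
    (hE0 : ∀ i j : Fin N, j ∉ tN i → E i j = 0)
    (hinj : ∀ (i j : Fin N) (hij : j ∈ tN i) (i' j' : Fin N) (hij' : j' ∈ tN i'),
      s i j hij = s i' j' hij' → i = i' ∧ j = j')
    (hsurj : ∀ t : Fin m, ∃ (i j : Fin N) (h : j ∈ tN i), s i j h = t)
    (H : Matrix (Fin m) (Fin N) ℝ)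
    (hH : H = Matrix.of fun (t : Fin m) (j : Fin N) => ∑ i : Fin N, E i j t)
    (ik jk : Fin N) (ind : Finset (Fin N))
    (hind : ∀ l ∈ ind, l ∈ tN ik ∧ l ∈ tN jk)
    (W : Matrix (Fin m) (Fin m) ℝ)
    (hW : W = 1 - (1 / 2 : ℝ) •
      ∑ l ∈ ind, vecMulVec (E ik l - E jk l) (E ik l - E jk l)) :
    W * H = H ∧ Hᵀ * W = Hᵀ := by
  -- key fact: the column sum at coordinate s a l hl picks out column l
  have hcol : ∀ (a l : Fin N) (hl : l ∈ tN a) (j : Fin N),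
      H (s a l hl) j = if l = j then 1 else 0 := by
    intro a l hl j
    rw [hH]
    simp only [Matrix.of_apply]
    have : ∀ i : Fin N, E i j (s a l hl) = if a = i ∧ l = j then 1 else 0 := by
      intro i
      by_cases h : j ∈ tN i
      · rw [hE i j h, Pi.single_apply]
        by_cases heq : s a l hl = s i j h
        · obtain ⟨h1, h2⟩ := hinj a l hl i j h heq
          rw [if_pos heq, if_pos ⟨h1, h2⟩]
        · rw [if_neg heq, if_neg]
          rintro ⟨rfl, rfl⟩
          exact heq rfl
      · rw [hE0 i j h, if_neg]
        · rfl
        · rintro ⟨rfl, rfl⟩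
          exact h hl
    simp only [this]
    by_cases hlj : l = j
    · subst hlj
      rw [Finset.sum_eq_single a]
      · simp
      · intro i _ hia
        rw [if_neg (fun hh => hia hh.1.symm)]
      · simp
    · rw [if_neg hlj]
      apply Finset.sum_eq_zero
      intro i _
      rw [if_neg (fun hh => hlj hh.2)]
  have hsingle : ∀ (a l : Fin N) (hl : l ∈ tN a) (j : Fin N),
      ∑ t, E a l t * H t j = if l = j then 1 else 0 := by
    intro a l hl j
    rw [hE a l hl]
    rw [Finset.sum_eq_single (s a l hl)]
    · rw [Pi.single_eq_same, one_mul]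
      exact hcol a l hl j
    · intro t _ ht
      rw [Pi.single_eq_of_ne ht, zero_mul]
    · simp
  have hdot : ∀ l ∈ ind, ∀ j : Fin N,
      ∑ t, (E ik l - E jk l) t * H t j = 0 := by
    intro l hl j
    obtain ⟨h1, h2⟩ := hind l hl
    simp only [Pi.sub_apply, sub_mul]
    rw [Finset.sum_sub_distrib, hsingle ik l h1 j, hsingle jk l h2 j, sub_self]
  have hSH : (∑ l ∈ ind, vecMulVec (E ik l - E jk l) (E ik l - E jk l)) * H = 0 := by
    rw [Matrix.sum_mul]
    apply Finset.sum_eq_zero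
    intro l hl
    ext t j
    simp only [Matrix.mul_apply, Matrix.vecMulVec_apply, Matrix.zero_apply]
    have : ∀ t' : Fin m, (E ik l - E jk l) t * (E ik l - E jk l) t' * H t' j
        = (E ik l - E jk l) t * ((E ik l - E jk l) t' * H t' j) := fun _ => mul_assoc _ _ _
    simp only [this]
    rw [← Finset.mul_sum, hdot l hl j, mul_zero]
  have hWH : W * H = H := by
    rw [hW, Matrix.sub_mul, Matrix.one_mul, Matrix.smul_mul, hSH, smul_zero, sub_zero]
  refine ⟨hWH, ?_⟩
  have hWsymm : Wᵀ = W := by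
    rw [hW]
    rw [Matrix.transpose_sub, Matrix.transpose_one, Matrix.transpose_smul,
      Matrix.transpose_sum]
    congr 1
    congr 1
    apply Finset.sum_congr rfl
    intro l _
    ext t t'
    simp [Matrix.vecMulVec_apply, mul_comm]
  calc Hᵀ * W = (Wᵀ * H)ᵀ := by rw [Matrix.transpose_mul, Matrix.transpose_transpose]
    _ = Hᵀ := by rw [hWsymm, hWH]
end

section
/- (Robbins–Siegmund) Let (V_k), (u_k), (β_k), (ζ_k) be sequences of non-negative random variables adapted to a filtration (M_k). If Σ_k u_k < ∞ a.s., Σ_k β_k < ∞ a.s., and E[V_{k+1} | M_k] ≤ (1 + u_k) V_k − ζ_k + β_k a.s. for all k ≥ 0, then V_k converges a.s. to a finite limit and Σ_k ζ_k < ∞ a.s. -/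
open MeasureTheory Filter

namespace RSaux

variable {Ω : Type*}

noncomputable def A (u : ℕ → Ω → ℝ) (k : ℕ) (ω : Ω) : ℝ := ∏ j ∈ Finset.range k, (1 + u j ω)

noncomputable def W (u V : ℕ → Ω → ℝ) (k : ℕ) (ω : Ω) : ℝ := (A u k ω)⁻¹ * V k ω

noncomputable def S (u β ζ : ℕ → Ω → ℝ) (k : ℕ) (ω : Ω) : ℝ :=
  ∑ j ∈ Finset.range k, (A u (j + 1) ω)⁻¹ * (ζ j ω - β j ω)

noncomputable def Y (u V β ζ : ℕ → Ω → ℝ) (k : ℕ) (ω : Ω) : ℝ := W u V k ω + S u β ζ k ω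

noncomputable def B (β : ℕ → Ω → ℝ) (k : ℕ) (ω : Ω) : ℝ := ∑ j ∈ Finset.range k, β j ω

noncomputable def ξ (β : ℕ → Ω → ℝ) (a k : ℕ) (ω : Ω) : ℝ :=
  if B β (k + 1) ω ≤ (a : ℝ) then 1 else 0

noncomputable def X (u V β ζ : ℕ → Ω → ℝ) (a n : ℕ) (ω : Ω) : ℝ :=
  Y u V β ζ 0 ω + ∑ k ∈ Finset.range n, ξ β a k ω * (Y u V β ζ (k + 1) ω - Y u V β ζ k ω)

section lemmas

variable {u V β ζ : ℕ → Ω → ℝ}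

lemma one_le_A (hu : ∀ k ω, 0 ≤ u k ω) (k : ℕ) (ω : Ω) : 1 ≤ A u k ω := by
  induction k with
  | zero => simp [A]
  | succ k ih =>
    rw [A, Finset.prod_range_succ, ← A]
    nlinarith [hu k ω]

lemma A_pos (hu : ∀ k ω, 0 ≤ u k ω) (k : ℕ) (ω : Ω) : 0 < A u k ω :=
  one_pos.trans_le (one_le_A hu k ω)

lemma inv_A_nonneg (hu : ∀ k ω, 0 ≤ u k ω) (k : ℕ) (ω : Ω) : 0 ≤ (A u k ω)⁻¹ :=
  inv_nonneg.mpr (A_pos hu k ω).le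

lemma inv_A_le_one (hu : ∀ k ω, 0 ≤ u k ω) (k : ℕ) (ω : Ω) : (A u k ω)⁻¹ ≤ 1 :=
  inv_le_one_of_one_le₀ (one_le_A hu k ω)

lemma A_succ (k : ℕ) (ω : Ω) : A u (k + 1) ω = A u k ω * (1 + u k ω) :=
  Finset.prod_range_succ _ _

lemma B_mono (hβ : ∀ k ω, 0 ≤ β k ω) {k m : ℕ} (h : k ≤ m) (ω : Ω) : B β k ω ≤ B β m ω :=
  Finset.sum_le_sum_of_subset_of_nonneg (Finset.range_subset_range.mpr h) fun j _ _ => hβ j ω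

lemma X_succ (a n : ℕ) (ω : Ω) :
    X u V β ζ a (n + 1) ω
      = X u V β ζ a n ω + ξ β a n ω * (Y u V β ζ (n + 1) ω - Y u V β ζ n ω) := by
  simp [X, Finset.sum_range_succ, add_assoc]

lemma X_eq (a : ℕ) (n : ℕ) (ω : Ω) (h : ∀ j < n, B β (j + 1) ω ≤ (a : ℝ)) :
    X u V β ζ a n ω = Y u V β ζ n ω := by
  induction n with
  | zero => simp [X]
  | succ n ih =>
    have hξ1 : ξ β a n ω = 1 := if_pos (h n n.lt_succ_self)
    rw [X_succ, ih fun j hj => h j (hj.trans n.lt_succ_self), hξ1]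
    ring

lemma X_stop (hβ : ∀ k ω, 0 ≤ β k ω) (a n : ℕ) (ω : Ω) :
    ∃ m, X u V β ζ a n ω = Y u V β ζ m ω ∧ B β m ω ≤ (a : ℝ) := by
  induction n with
  | zero => exact ⟨0, by simp [X], by simp [B, Nat.cast_nonneg]⟩
  | succ n ih =>
    by_cases h : B β (n + 1) ω ≤ (a : ℝ)
    · exact ⟨n + 1, X_eq a (n + 1) ω fun j hj =>
        le_trans (B_mono hβ (by omega) ω) h, h⟩
    · obtain ⟨m, hm, hBm⟩ := ih
      refine ⟨m, ?_, hBm⟩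
      rw [X_succ, hm]
      have hξ0 : ξ β a n ω = 0 := if_neg h
      rw [hξ0]; ring

lemma neg_B_le_Y (hu : ∀ k ω, 0 ≤ u k ω) (hV : ∀ k ω, 0 ≤ V k ω)
    (hβ : ∀ k ω, 0 ≤ β k ω) (hζ : ∀ k ω, 0 ≤ ζ k ω) (m : ℕ) (ω : Ω) :
    -(B β m ω) ≤ Y u V β ζ m ω := by
  have hS : -(B β m ω) ≤ S u β ζ m ω := by
    rw [B, ← Finset.sum_neg_distrib]
    refine Finset.sum_le_sum fun j _ => ?_
    have h1 : 0 ≤ (A u (j + 1) ω)⁻¹ * ζ j ω :=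
      mul_nonneg (inv_A_nonneg hu _ ω) (hζ j ω)
    have h2 : (A u (j + 1) ω)⁻¹ * β j ω ≤ β j ω :=
      mul_le_of_le_one_left (hβ j ω) (inv_A_le_one hu _ ω)
    have h3 : (A u (j + 1) ω)⁻¹ * (ζ j ω - β j ω)
        = (A u (j + 1) ω)⁻¹ * ζ j ω - (A u (j + 1) ω)⁻¹ * β j ω := by ring
    linarith
  have hW : 0 ≤ W u V m ω := mul_nonneg (inv_A_nonneg hu _ ω) (hV m ω)
  have : Y u V β ζ m ω = W u V m ω + S u β ζ m ω := rfl
  linarith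

end lemmas

end RSaux

open RSaux

/-- Robbins–Siegmund lemma: if `V, u, β, ζ` are non-negative adapted processes with
`Σ u_k < ∞` a.s., `Σ β_k < ∞` a.s. and
`E[V_{k+1} | M_k] ≤ (1 + u_k) V_k − ζ_k + β_k` a.s. for all `k`,
then `V_k` converges a.s. to a finite limit and `Σ ζ_k < ∞` a.s. -/
theorem stmt_8 {Ω : Type*} {m0 : MeasurableSpace Ω} {μ : Measure Ω}
    [IsProbabilityMeasure μ] (ℱ : Filtration ℕ m0)
    (V u β ζ : ℕ → Ω → ℝ)
    (hVa : Adapted ℱ V) (hua : Adapted ℱ u) (hβa : Adapted ℱ β) (hζa : Adapted ℱ ζ)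
    (hVpos : ∀ k ω, 0 ≤ V k ω) (hupos : ∀ k ω, 0 ≤ u k ω)
    (hβpos : ∀ k ω, 0 ≤ β k ω) (hζpos : ∀ k ω, 0 ≤ ζ k ω)
    (hVint : ∀ k, Integrable (V k) μ) (huint : ∀ k, Integrable (u k) μ)
    (hβint : ∀ k, Integrable (β k) μ) (hζint : ∀ k, Integrable (ζ k) μ)
    (husum : ∀ᵐ ω ∂μ, Summable fun k => u k ω)
    (hβsum : ∀ᵐ ω ∂μ, Summable fun k => β k ω)
    (hrec : ∀ k, μ[V (k + 1) | ℱ k]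
      ≤ᵐ[μ] fun ω => (1 + u k ω) * V k ω - ζ k ω + β k ω) :
    ∀ᵐ ω ∂μ, (∃ c : ℝ, Tendsto (fun k => V k ω) atTop (nhds c)) ∧
      Summable fun k => ζ k ω := by
  classical
  -- measurability of A
  have hAm : ∀ {k n : ℕ}, k ≤ n + 1 → StronglyMeasurable[ℱ n] (A u k) := by
    intro k n hk
    have : A u k = fun ω => ∏ j ∈ Finset.range k, (1 + u j ω) := rfl
    rw [this]
    exact Finset.stronglyMeasurable_fun_prod _ fun j hj =>
      stronglyMeasurable_const.add
        ((hua j).stronglyMeasurable.mono (ℱ.mono (by simp at hj; omega)))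
  have hAim : ∀ {k n : ℕ}, k ≤ n + 1 → StronglyMeasurable[ℱ n] fun ω => (A u k ω)⁻¹ :=
    fun hk => ((hAm hk).measurable.inv).stronglyMeasurable
  have hAibdd : ∀ k : ℕ, ∃ C, ∀ ω, ‖(A u k ω)⁻¹‖ ≤ C :=
    fun k => ⟨1, fun ω => by
      rw [Real.norm_eq_abs, abs_of_nonneg (inv_A_nonneg hupos k ω)]
      exact inv_A_le_one hupos k ω⟩
  have hWm : ∀ k, StronglyMeasurable[ℱ k] (W u V k) :=
    fun k => (hAim k.le_succ).mul (hVa k).stronglyMeasurable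
  have hSm : ∀ {k n : ℕ}, k ≤ n + 1 → StronglyMeasurable[ℱ n] (S u β ζ k) := by
    intro k n hk
    have : S u β ζ k
        = fun ω => ∑ j ∈ Finset.range k, (A u (j + 1) ω)⁻¹ * (ζ j ω - β j ω) := rfl
    rw [this]
    refine Finset.stronglyMeasurable_fun_sum _ fun j hj => ?_
    simp only [Finset.mem_range] at hj
    exact (hAim (by omega)).mul
      (((hζa j).stronglyMeasurable.mono (ℱ.mono (by omega))).sub ((hβa j).stronglyMeasurable.mono (ℱ.mono (by omega))))
  have hYm : ∀ k, StronglyMeasurable[ℱ k] (Y u V β ζ k) :=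
    fun k => (hWm k).add (hSm k.le_succ)
  -- integrability
  have hWint : ∀ k, Integrable (W u V k) μ :=
    fun k => (hVint k).bdd_mul
      ((hAim k.le_succ).mono (ℱ.le k)).aestronglyMeasurable (ae_of_all _ (hAibdd k).choose_spec)
  have hSint : ∀ k, Integrable (S u β ζ k) μ := by
    intro k
    have : S u β ζ k
        = fun ω => ∑ j ∈ Finset.range k, (A u (j + 1) ω)⁻¹ * (ζ j ω - β j ω) := rfl
    rw [this]
    refine integrable_finset_sum _ fun j hj => ?_
    exact ((hζint j).sub (hβint j)).bdd_mul
      ((hAim (le_refl (j + 1))).mono (ℱ.le j)).aestronglyMeasurable (ae_of_all _ (hAibdd (j + 1)).choose_spec)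
  have hYint : ∀ k, Integrable (Y u V β ζ k) μ := fun k => (hWint k).add (hSint k)
  -- Y is a supermartingale
  have hY : Supermartingale (Y u V β ζ) ℱ μ := by
    refine supermartingale_nat hYm hYint fun k => ?_
    have hYdec : Y u V β ζ (k + 1) = W u V (k + 1) + S u β ζ (k + 1) := rfl
    have h1 : μ[Y u V β ζ (k + 1)|ℱ k]
        =ᵐ[μ] μ[W u V (k + 1)|ℱ k] + μ[S u β ζ (k + 1)|ℱ k] := by
      rw [hYdec]; exact condExp_add (hWint _) (hSint _) _
    have h2 : μ[S u β ζ (k + 1)|ℱ k] = S u β ζ (k + 1) :=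
      condExp_of_stronglyMeasurable (ℱ.le k) (hSm (le_refl (k + 1))) (hSint (k + 1))
    have hWdec : W u V (k + 1) = fun ω => (A u (k + 1) ω)⁻¹ * V (k + 1) ω := rfl
    have h3 : μ[W u V (k + 1)|ℱ k]
        =ᵐ[μ] (fun ω => (A u (k + 1) ω)⁻¹) * μ[V (k + 1)|ℱ k] := by
      have hWint' : Integrable ((fun ω => (A u (k + 1) ω)⁻¹) * V (k + 1)) μ :=
        (hVint (k + 1)).bdd_mul
          ((hAim (le_refl (k + 1))).mono (ℱ.le k)).aestronglyMeasurable (ae_of_all _ (hAibdd (k + 1)).choose_spec)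
      have := condExp_mul_of_stronglyMeasurable_left (m := ℱ k) (μ := μ)
        (hAim (le_refl (k + 1))) hWint' (hVint (k + 1))
      rw [hWdec]; exact this
    filter_upwards [h1, h3, hrec k] with ω h1ω h3ω hrecω
    have h2ω : (μ[S u β ζ (k + 1)|ℱ k]) ω = S u β ζ (k + 1) ω := by rw [h2]
    have hc0 : 0 ≤ (A u (k + 1) ω)⁻¹ := inv_A_nonneg hupos _ ω
    have hcE : (A u (k + 1) ω)⁻¹ * (μ[V (k + 1)|ℱ k]) ω
        ≤ (A u (k + 1) ω)⁻¹ * ((1 + u k ω) * V k ω - ζ k ω + β k ω) :=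
      mul_le_mul_of_nonneg_left hrecω hc0
    have hkey : (A u (k + 1) ω)⁻¹ * (1 + u k ω) = (A u k ω)⁻¹ := by
      have h1u : (1 : ℝ) + u k ω ≠ 0 := by have := hupos k ω; positivity
      rw [A_succ, mul_inv, mul_assoc, inv_mul_cancel₀ h1u, mul_one]
    have hSsucc : S u β ζ (k + 1) ω
        = S u β ζ k ω + (A u (k + 1) ω)⁻¹ * (ζ k ω - β k ω) := by
      simp [S, Finset.sum_range_succ]
    have hexpand : (A u (k + 1) ω)⁻¹ * ((1 + u k ω) * V k ω - ζ k ω + β k ω)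
        + (S u β ζ k ω + (A u (k + 1) ω)⁻¹ * (ζ k ω - β k ω))
        = (A u k ω)⁻¹ * V k ω + S u β ζ k ω := by
      rw [← hkey]; ring
    have hYk : Y u V β ζ k ω = (A u k ω)⁻¹ * V k ω + S u β ζ k ω := rfl
    rw [h1ω]
    simp only [Pi.add_apply, Pi.mul_apply] at h3ω ⊢
    rw [h3ω, h2ω, hSsucc, hYk]
    linarith
  -- the stopped-type process X is a supermartingale
  have hξm : ∀ a k, StronglyMeasurable[ℱ k] (ξ β a k) := by
    intro a k
    have hBmeas : Measurable[ℱ k] (B β (k + 1)) := by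
      have : B β (k + 1) = fun ω => ∑ j ∈ Finset.range (k + 1), β j ω := rfl
      rw [this]
      exact (Finset.stronglyMeasurable_fun_sum _ fun j hj =>
        (hβa j).stronglyMeasurable.mono (ℱ.mono (by simp at hj; omega))).measurable
    have hs : MeasurableSet[ℱ k] {ω | B β (k + 1) ω ≤ (a : ℝ)} :=
      hBmeas measurableSet_Iic
    exact (Measurable.ite hs measurable_const measurable_const).stronglyMeasurable
  have hXsuper : ∀ a : ℕ, Supermartingale (X u V β ζ a) ℱ μ := by
    intro a
    have hsub : Submartingale
        (fun n => ∑ k ∈ Finset.range n, ξ β a k * ((-Y u V β ζ) (k + 1) - (-Y u V β ζ) k))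
        ℱ μ := by
      refine hY.neg.sum_mul_sub (R := 1) (fun k => hξm a k) ?_ ?_
      · intro n ω; simp only [ξ]; split_ifs <;> norm_num
      · intro n ω; simp only [ξ]; split_ifs <;> norm_num
    have hmart : Martingale (fun _ : ℕ => Y u V β ζ 0) ℱ μ := by
      refine martingale_nat (fun k => (hYm 0).mono (ℱ.mono k.zero_le))
        (fun _ => hYint 0) fun i => ?_
      rw [condExp_of_stronglyMeasurable (ℱ.le i) ((hYm 0).mono (ℱ.mono i.zero_le)) (hYint 0)]
    have hfun : X u V β ζ a = (fun _ : ℕ => Y u V β ζ 0)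
        - fun n => ∑ k ∈ Finset.range n, ξ β a k * ((-Y u V β ζ) (k + 1) - (-Y u V β ζ) k) := by
      funext n ω
      simp only [Pi.sub_apply, Pi.neg_apply, Pi.mul_apply, Finset.sum_apply, X, sub_eq_add_neg,
        ← Finset.sum_neg_distrib]
      congr 1
      refine Finset.sum_congr rfl fun k _ => ?_
      simp only [Pi.sub_apply, Pi.neg_apply, Pi.add_apply]
      ring
    rw [hfun]
    exact hmart.supermartingale.sub_submartingale hsub
  -- lower bound on X
  have hXlb : ∀ (a n : ℕ) (ω : Ω), -(a : ℝ) ≤ X u V β ζ a n ω := by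
    intro a n ω
    obtain ⟨m, hm, hBm⟩ := X_stop (u := u) (V := V) (ζ := ζ) hβpos a n ω
    rw [hm]
    have := neg_B_le_Y (u := u) (V := V) hupos hVpos hβpos hζpos m ω
    linarith
  -- integral bound
  have hX0 : ∀ a, X u V β ζ a 0 = Y u V β ζ 0 := by
    intro a; funext ω; simp [X]
  have hint_le : ∀ a n, ∫ ω, X u V β ζ a n ω ∂μ ≤ ∫ ω, Y u V β ζ 0 ω ∂μ := by
    intro a n
    have h := (hXsuper a).setIntegral_le (Nat.zero_le n) (MeasurableSet.univ (α := Ω))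
    rw [Measure.restrict_univ] at h
    rw [← hX0 a]
    exact h
  -- L¹ bound
  have hbdd : ∀ a : ℕ, ∀ n, eLpNorm (X u V β ζ a n) 1 μ
      ≤ ENNReal.ofReal (∫ ω, Y u V β ζ 0 ω ∂μ + 2 * a) := by
    intro a n
    have hXint : Integrable (X u V β ζ a n) μ := (hXsuper a).integrable n
    rw [eLpNorm_one_eq_lintegral_enorm, ← ofReal_integral_norm_eq_lintegral_enorm hXint]
    apply ENNReal.ofReal_le_ofReal
    have hptw : ∀ ω, ‖X u V β ζ a n ω‖ ≤ X u V β ζ a n ω + 2 * a := by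
      intro ω
      have h1 := hXlb a n ω
      rw [Real.norm_eq_abs]
      rcases abs_cases (X u V β ζ a n ω) with ⟨h, _⟩ | ⟨h, _⟩ <;>
        [nlinarith [Nat.cast_nonneg (α := ℝ) a]; linarith]
    calc ∫ ω, ‖X u V β ζ a n ω‖ ∂μ
        ≤ ∫ ω, (X u V β ζ a n ω + 2 * a) ∂μ :=
          integral_mono hXint.norm (hXint.add (integrable_const _)) hptw
      _ = ∫ ω, X u V β ζ a n ω ∂μ + 2 * a := by
          rw [integral_add hXint (integrable_const _), integral_const]
          simp
      _ ≤ ∫ ω, Y u V β ζ 0 ω ∂μ + 2 * a := by linarith [hint_le a n]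
  -- a.e. convergence of each X a
  have hconv : ∀ a : ℕ, ∀ᵐ ω ∂μ, ∃ c, Tendsto (fun n => X u V β ζ a n ω) atTop (nhds c) := by
    intro a
    set R : NNReal := (∫ ω, Y u V β ζ 0 ω ∂μ + 2 * a).toNNReal with hR
    have hsubneg : Submartingale (-(X u V β ζ a)) ℱ μ := (hXsuper a).neg
    have hb : ∀ n, eLpNorm ((-(X u V β ζ a)) n) 1 μ ≤ (R : ENNReal) := by
      intro n
      have : (-(X u V β ζ a)) n = -(X u V β ζ a n) := rfl
      rw [this, eLpNorm_neg]
      simpa [hR, ENNReal.ofReal] using hbdd a n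
    filter_upwards [hsubneg.exists_ae_tendsto_of_bdd hb] with ω hω
    obtain ⟨c, hc⟩ := hω
    refine ⟨-c, ?_⟩
    have : (fun n => X u V β ζ a n ω) = fun n => -((-(X u V β ζ a)) n ω) := by
      funext n; simp
    rw [this]
    exact hc.neg
  -- endgame
  filter_upwards [husum, hβsum, ae_all_iff.mpr hconv] with ω huω hβω hXω
  obtain ⟨a, ha⟩ := exists_nat_gt (∑' k, β k ω)
  have hBle : ∀ j : ℕ, B β (j + 1) ω ≤ (a : ℝ) := by
    intro j
    refine le_trans ?_ ha.le
    exact Summable.sum_le_tsum (Finset.range (j + 1)) (fun i _ => hβpos i ω) hβω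
  obtain ⟨c, hc⟩ := hXω a
  have hYc : Tendsto (fun n => Y u V β ζ n ω) atTop (nhds c) :=
    hc.congr fun n => X_eq a n ω fun j _ => hBle j
  -- summability of discounted β
  have hSβ : Summable fun j => (A u (j + 1) ω)⁻¹ * β j ω := by
    refine Summable.of_nonneg_of_le
      (fun j => mul_nonneg (inv_A_nonneg hupos _ ω) (hβpos j ω)) (fun j => ?_) hβω
    exact mul_le_of_le_one_left (hβpos j ω) (inv_A_le_one hupos _ ω)
  -- bound on Y
  obtain ⟨C, hC⟩ := hYc.bddAbove_range
  have hCle : ∀ n, Y u V β ζ n ω ≤ C := fun n => hC (Set.mem_range_self n)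
  -- summability of discounted ζ
  have hSζ : Summable fun j => (A u (j + 1) ω)⁻¹ * ζ j ω := by
    refine summable_of_sum_range_le
      (c := C + ∑' j, (A u (j + 1) ω)⁻¹ * β j ω)
      (fun j => mul_nonneg (inv_A_nonneg hupos _ ω) (hζpos j ω)) fun n => ?_
    have h1 : ∑ j ∈ Finset.range n, (A u (j + 1) ω)⁻¹ * ζ j ω
        = S u β ζ n ω + ∑ j ∈ Finset.range n, (A u (j + 1) ω)⁻¹ * β j ω := by
      rw [S, ← Finset.sum_add_distrib]
      exact Finset.sum_congr rfl fun j _ => by ring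
    have h2 : S u β ζ n ω = Y u V β ζ n ω - W u V n ω := by
      have : Y u V β ζ n ω = W u V n ω + S u β ζ n ω := rfl
      linarith
    have h3 : 0 ≤ W u V n ω := mul_nonneg (inv_A_nonneg hupos _ ω) (hVpos n ω)
    have h4 : ∑ j ∈ Finset.range n, (A u (j + 1) ω)⁻¹ * β j ω
        ≤ ∑' j, (A u (j + 1) ω)⁻¹ * β j ω :=
      Summable.sum_le_tsum _ (fun i _ => mul_nonneg (inv_A_nonneg hupos _ ω) (hβpos i ω)) hSβ
    rw [h1]
    linarith [hCle n]
  -- A is bounded by exp of tsum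
  have hK : ∀ j : ℕ, A u j ω ≤ Real.exp (∑' i, u i ω) := by
    intro j
    have h1 : A u j ω ≤ ∏ i ∈ Finset.range j, Real.exp (u i ω) := by
      have : A u j ω = ∏ i ∈ Finset.range j, (1 + u i ω) := rfl
      rw [this]
      refine Finset.prod_le_prod (fun i _ => by linarith [hupos i ω]) fun i _ => ?_
      rw [add_comm]
      exact Real.add_one_le_exp (u i ω)
    calc A u j ω ≤ ∏ i ∈ Finset.range j, Real.exp (u i ω) := h1
      _ = Real.exp (∑ i ∈ Finset.range j, u i ω) := (Real.exp_sum _ _).symm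
      _ ≤ Real.exp (∑' i, u i ω) :=
          Real.exp_le_exp.mpr (Summable.sum_le_tsum _ (fun i _ => hupos i ω) huω)
  -- summability of ζ
  have hζsum : Summable fun j => ζ j ω := by
    refine Summable.of_nonneg_of_le (fun j => hζpos j ω) (fun j => ?_)
      (hSζ.mul_left (Real.exp (∑' i, u i ω)))
    have hApos := A_pos hupos (j + 1) ω
    have heq : ζ j ω = A u (j + 1) ω * ((A u (j + 1) ω)⁻¹ * ζ j ω) := by
      field_simp
    calc ζ j ω = A u (j + 1) ω * ((A u (j + 1) ω)⁻¹ * ζ j ω) := heq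
      _ ≤ Real.exp (∑' i, u i ω) * ((A u (j + 1) ω)⁻¹ * ζ j ω) :=
          mul_le_mul_of_nonneg_right (hK (j + 1))
            (mul_nonneg (inv_A_nonneg hupos _ ω) (hζpos j ω))
  -- convergence of V
  have hSβt : Tendsto (fun n => ∑ j ∈ Finset.range n, (A u (j + 1) ω)⁻¹ * β j ω)
      atTop (nhds (∑' j, (A u (j + 1) ω)⁻¹ * β j ω)) := hSβ.hasSum.tendsto_sum_nat
  have hSζt : Tendsto (fun n => ∑ j ∈ Finset.range n, (A u (j + 1) ω)⁻¹ * ζ j ω)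
      atTop (nhds (∑' j, (A u (j + 1) ω)⁻¹ * ζ j ω)) := hSζ.hasSum.tendsto_sum_nat
  have hSt : Tendsto (fun n => S u β ζ n ω) atTop
      (nhds ((∑' j, (A u (j + 1) ω)⁻¹ * ζ j ω) - ∑' j, (A u (j + 1) ω)⁻¹ * β j ω)) := by
    refine (hSζt.sub hSβt).congr fun n => ?_
    rw [S, ← Finset.sum_sub_distrib]
    exact Finset.sum_congr rfl fun j _ => by ring
  have hWt : Tendsto (fun n => W u V n ω) atTop
      (nhds (c - ((∑' j, (A u (j + 1) ω)⁻¹ * ζ j ω) - ∑' j, (A u (j + 1) ω)⁻¹ * β j ω))) := by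
    refine (hYc.sub hSt).congr fun n => ?_
    have : Y u V β ζ n ω = W u V n ω + S u β ζ n ω := rfl
    linarith
  have hAmono : Monotone fun n => A u n ω := by
    refine monotone_nat_of_le_succ fun n => ?_
    rw [A_succ]
    nlinarith [A_pos hupos n ω, hupos n ω]
  have hAbdd : BddAbove (Set.range fun n => A u n ω) := by
    refine ⟨Real.exp (∑' i, u i ω), ?_⟩
    rintro x ⟨n, rfl⟩
    exact hK n
  have hAt : Tendsto (fun n => A u n ω) atTop (nhds (⨆ n, A u n ω)) :=
    tendsto_atTop_ciSup hAmono hAbdd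
  have hVt : Tendsto (fun n => V n ω) atTop
      (nhds ((⨆ n, A u n ω) *
        (c - ((∑' j, (A u (j + 1) ω)⁻¹ * ζ j ω) - ∑' j, (A u (j + 1) ω)⁻¹ * β j ω)))) := by
    refine (hAt.mul hWt).congr fun n => ?_
    have hApos := A_pos hupos n ω
    have : W u V n ω = (A u n ω)⁻¹ * V n ω := rfl
    rw [this]
    field_simp
  exact ⟨⟨_, hVt⟩, hζsum⟩
end
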